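/- Let P ∈ ℂ^{n×n} be Hermitian positive definite and let A ∈ ℂ^{n×n}. Then the matrix measure μ(A) = sup over nonzero δ ∈ ℂⁿ of Re(δᴴ P A δ) / Re(δᴴ P δ) equals the largest eigenvalue of the Hermitian matrix (1/2) P^{-1/2}(PA + AᴴP)P^{-1/2}, where P^{1/2} is the Hermitian positive-definite square root of P. -/

import Mathlib

open Matrix
open scoped ComplexOrder

/-- The positive semidefinite square root of a positive semidefinite matrix
(as defined in Mathlib of December 2024, since removed). -/
noncomputable def Matrix.PosSemidef.sqrt {n 𝕜 : Type*} [RCLike 𝕜] [Fintype n] [DecidableEq n]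
    {A : Matrix n n 𝕜} (hA : A.PosSemidef) : Matrix n n 𝕜 :=
  hA.1.eigenvectorUnitary.1 * diagonal ((↑) ∘ (√·) ∘ hA.1.eigenvalues) *
  (star hA.1.eigenvectorUnitary : Matrix n n 𝕜)

/-- The matrix measure of `A` with respect to the weighted inner product
`⟨y, x⟩_P = Re (yᴴ P x)`: the supremum of the Rayleigh-type quotient
`Re (δᴴ P A δ) / Re (δᴴ P δ)` over nonzero `δ`. -/
noncomputable def matrixMeasure {n : ℕ} (P A : Matrix (Fin n) (Fin n) ℂ) : ℝ :=
  ⨆ δ : {v : Fin n → ℂ // v ≠ 0},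
    (star δ.1 ⬝ᵥ P.mulVec (A.mulVec δ.1)).re / (star δ.1 ⬝ᵥ P.mulVec δ.1).re


lemma Matrix.PosSemidef.sqrt_mul_self {n : ℕ} {A : Matrix (Fin n) (Fin n) ℂ}
    (hA : A.PosSemidef) : hA.sqrt * hA.sqrt = A := by
  have hU : (star hA.1.eigenvectorUnitary : Matrix (Fin n) (Fin n) ℂ) *
      hA.1.eigenvectorUnitary.1 = 1 := Unitary.coe_star_mul_self _
  have hD : diagonal (((↑) ∘ (√·) ∘ hA.1.eigenvalues : Fin n → ℂ)) *
      diagonal ((↑) ∘ (√·) ∘ hA.1.eigenvalues) = diagonal (RCLike.ofReal ∘ hA.1.eigenvalues) := by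
    rw [diagonal_mul_diagonal]
    congr 1
    funext i
    simp only [Function.comp_apply]
    rw [← Complex.ofReal_mul, Real.mul_self_sqrt (hA.eigenvalues_nonneg i)]
    rfl
  conv_rhs => rw [hA.1.spectral_theorem, Unitary.conjStarAlgAut_apply]
  unfold Matrix.PosSemidef.sqrt
  calc _ = hA.1.eigenvectorUnitary.1 * (diagonal ((↑) ∘ (√·) ∘ hA.1.eigenvalues) *
      ((star hA.1.eigenvectorUnitary : Matrix (Fin n) (Fin n) ℂ) *
      hA.1.eigenvectorUnitary.1) * diagonal ((↑) ∘ (√·) ∘ hA.1.eigenvalues)) *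
      (star hA.1.eigenvectorUnitary : Matrix (Fin n) (Fin n) ℂ) := by
        simp only [Matrix.mul_assoc]; rfl
    _ = _ := by rw [hU, Matrix.mul_one, hD]

lemma Matrix.PosSemidef.sqrt_conjTranspose {n : ℕ} {A : Matrix (Fin n) (Fin n) ℂ}
    (hA : A.PosSemidef) : hA.sqrtᴴ = hA.sqrt := by
  unfold Matrix.PosSemidef.sqrt
  rw [conjTranspose_mul, conjTranspose_mul, diagonal_conjTranspose, Matrix.mul_assoc]
  congr 2
  · rw [Matrix.star_eq_conjTranspose, conjTranspose_conjTranspose]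
  · congr 1; funext i; simp

open Matrix

private lemma re_conj_mul (r : ℝ) (z : ℂ) :
    (star z * ((r:ℂ) * z)).re = r * Complex.normSq z := by
  simp [Complex.star_def, Complex.normSq_apply, Complex.mul_re, Complex.mul_im]; ring

private lemma re_star_mul (z : ℂ) : (star z * z).re = Complex.normSq z := by
  simp [Complex.star_def, Complex.normSq_apply, Complex.mul_re]

open scoped ComplexOrder

lemma rayleigh_sup_eq {n : ℕ} (hn : 0 < n) {M : Matrix (Fin n) (Fin n) ℂ}
    (hM : M.IsHermitian) :
    (⨆ v : {v : Fin n → ℂ // v ≠ 0},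
        (star v.1 ⬝ᵥ M.mulVec v.1).re / (star v.1 ⬝ᵥ v.1).re) = ⨆ i, hM.eigenvalues i := by
  haveI : Nonempty (Fin n) := ⟨⟨0, hn⟩⟩
  set U : Matrix (Fin n) (Fin n) ℂ := (hM.eigenvectorUnitary : Matrix (Fin n) (Fin n) ℂ) with hU
  have hUU : U * star U = 1 := (Matrix.mem_unitaryGroup_iff).mp hM.eigenvectorUnitary.2
  set lam := hM.eigenvalues with hlam
  -- numerator formula
  have hw_num : ∀ v : Fin n → ℂ,
      (star v ⬝ᵥ M.mulVec v).re = ∑ i, lam i * Complex.normSq ((star U *ᵥ v) i) := by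
    intro v
    set w := star U *ᵥ v with hw
    have hstarw : star w = star v ᵥ* U := by
      rw [hw, star_mulVec, Matrix.star_eq_conjTranspose, conjTranspose_conjTranspose]
    have h1 : star v ⬝ᵥ M.mulVec v = star w ⬝ᵥ (diagonal (RCLike.ofReal ∘ lam) *ᵥ w) := by
      conv_lhs => rw [hM.spectral_theorem, Unitary.conjStarAlgAut_apply]
      rw [← hU, ← hlam, ← mulVec_mulVec, ← mulVec_mulVec, ← hw, dotProduct_mulVec, ← hstarw]
    rw [h1]
    rw [dotProduct, Complex.re_sum]
    refine Finset.sum_congr rfl fun i _ => ?_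
    rw [mulVec_diagonal]
    have hcast : (RCLike.ofReal ∘ lam) i = ((lam i : ℝ) : ℂ) := rfl
    rw [Pi.star_apply, hcast, re_conj_mul]
  -- denominator formula
  have hw_den : ∀ v : Fin n → ℂ,
      (star v ⬝ᵥ v).re = ∑ i, Complex.normSq ((star U *ᵥ v) i) := by
    intro v
    set w := star U *ᵥ v with hw
    have hstarw : star w = star v ᵥ* U := by
      rw [hw, star_mulVec, Matrix.star_eq_conjTranspose, conjTranspose_conjTranspose]
    have h1 : star v ⬝ᵥ v = star w ⬝ᵥ w := by
      rw [hstarw, hw, ← dotProduct_mulVec, mulVec_mulVec, hUU, one_mulVec]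
    rw [h1, dotProduct, Complex.re_sum]
    refine Finset.sum_congr rfl fun i _ => ?_
    rw [Pi.star_apply, re_star_mul]
  -- w nonzero for v nonzero
  have hwne : ∀ v : Fin n → ℂ, v ≠ 0 → star U *ᵥ v ≠ 0 := by
    intro v hv h
    apply hv
    have : U *ᵥ (star U *ᵥ v) = v := by rw [mulVec_mulVec, hUU, one_mulVec]
    rw [h, mulVec_zero] at this
    exact this.symm
  have hbdd : BddAbove (Set.range lam) := Set.Finite.bddAbove (Set.finite_range lam)
  -- upper bound
  have upper : ∀ v : Fin n → ℂ, v ≠ 0 →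
      (star v ⬝ᵥ M.mulVec v).re / (star v ⬝ᵥ v).re ≤ ⨆ i, lam i := by
    intro v hv
    have hwne' := hwne v hv
    obtain ⟨j, hj⟩ : ∃ j, (star U *ᵥ v) j ≠ 0 := by
      by_contra h
      push_neg at h
      exact hwne' (funext h)
    have hden : 0 < (star v ⬝ᵥ v).re := by
      rw [hw_den]
      refine Finset.sum_pos' (fun i _ => Complex.normSq_nonneg _) ⟨j, Finset.mem_univ j, ?_⟩
      exact Complex.normSq_pos.mpr hj
    rw [div_le_iff₀ hden, hw_num, hw_den, Finset.mul_sum]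
    refine Finset.sum_le_sum fun i _ => ?_
    exact mul_le_mul_of_nonneg_right (le_ciSup hbdd i) (Complex.normSq_nonneg _)
  -- achievement
  have achieve : ∀ i : Fin n, ∃ v : Fin n → ℂ, v ≠ 0 ∧
      (star v ⬝ᵥ M.mulVec v).re / (star v ⬝ᵥ v).re = lam i := by
    intro i
    refine ⟨U *ᵥ Pi.single i 1, ?_, ?_⟩
    · intro h
      have h2 : star U *ᵥ (U *ᵥ Pi.single i 1) = Pi.single i 1 := by
        rw [mulVec_mulVec, (Matrix.mem_unitaryGroup_iff').mp hM.eigenvectorUnitary.2, one_mulVec]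
      rw [h, mulVec_zero] at h2
      have := congrFun h2 i
      simp [Pi.single_eq_same] at this
    · have hw : star U *ᵥ (U *ᵥ Pi.single i 1) = Pi.single i 1 := by
        rw [mulVec_mulVec, (Matrix.mem_unitaryGroup_iff').mp hM.eigenvectorUnitary.2, one_mulVec]
      rw [hw_num, hw_den, hw]
      have hsum1 : ∑ k, Complex.normSq (Pi.single (M := fun _ : Fin n => ℂ) i 1 k) = 1 := by
        rw [Finset.sum_eq_single i]
        · simp
        · intro b _ hb; rw [Pi.single_eq_of_ne hb]; simp
        · intro h; exact absurd (Finset.mem_univ i) h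
      have hsum2 : ∑ k, lam k * Complex.normSq (Pi.single (M := fun _ : Fin n => ℂ) i 1 k)
          = lam i := by
        rw [Finset.sum_eq_single i]
        · simp
        · intro b _ hb; rw [Pi.single_eq_of_ne hb]; simp
        · intro h; exact absurd (Finset.mem_univ i) h
      rw [hsum1, hsum2, div_one]
  -- conclude
  haveI : Nonempty {v : Fin n → ℂ // v ≠ 0} := by
    refine ⟨⟨Pi.single ⟨0, hn⟩ 1, ?_⟩⟩
    intro h
    have := congrFun h ⟨0, hn⟩
    simp [Pi.single_eq_same] at this
  apply le_antisymm
  · exact ciSup_le fun v => upper v.1 v.2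
  · refine ciSup_le fun i => ?_
    obtain ⟨v, hv, hve⟩ := achieve i
    rw [← hve]
    refine le_ciSup (f := fun v : {v : Fin n → ℂ // v ≠ 0} =>
      (star v.1 ⬝ᵥ M.mulVec v.1).re / (star v.1 ⬝ᵥ v.1).re) ?_ ⟨v, hv⟩
    refine ⟨⨆ i, lam i, ?_⟩
    rintro x ⟨u, rfl⟩
    exact upper u.1 u.2

open scoped ComplexOrder in
set_option maxHeartbeats 1000000 in
theorem matrixMeasure_eq_largest_eigenvalue' {n : ℕ} (hn : 0 < n)
    (P A : Matrix (Fin n) (Fin n) ℂ) (hP : P.PosDef)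
    (hM : (((1 : ℂ) / 2) •
        ((hP.posSemidef.sqrt)⁻¹ * (P * A + Aᴴ * P) * (hP.posSemidef.sqrt)⁻¹)).IsHermitian) :
    (⨆ δ : {v : Fin n → ℂ // v ≠ 0},
      (star δ.1 ⬝ᵥ P.mulVec (A.mulVec δ.1)).re / (star δ.1 ⬝ᵥ P.mulVec δ.1).re)
      = ⨆ i, hM.eigenvalues i := by
  set S := hP.posSemidef.sqrt with hSdef
  set M := ((1 : ℂ) / 2) • (S⁻¹ * (P * A + Aᴴ * P) * S⁻¹) with hMdef
  have hSS : S * S = P := hP.posSemidef.sqrt_mul_self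
  have hSH : Sᴴ = S := hP.posSemidef.sqrt_conjTranspose
  have hdet : IsUnit S.det := by
    rw [isUnit_iff_ne_zero]
    intro h
    apply hP.det_pos.ne'
    rw [← hSS, det_mul, h, mul_zero]
  have hinv1 : S * S⁻¹ = 1 := mul_nonsing_inv S hdet
  have hinv2 : S⁻¹ * S = 1 := nonsing_inv_mul S hdet
  -- the equivalence on nonzero vectors
  let e : {v : Fin n → ℂ // v ≠ 0} ≃ {v : Fin n → ℂ // v ≠ 0} :=
    { toFun := fun δ => ⟨S *ᵥ δ.1, by
        intro h
        apply δ.2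
        have h2 : S⁻¹ *ᵥ (S *ᵥ δ.1) = δ.1 := by rw [mulVec_mulVec, hinv2, one_mulVec]
        rw [h, mulVec_zero] at h2; exact h2.symm⟩
      invFun := fun v => ⟨S⁻¹ *ᵥ v.1, by
        intro h
        apply v.2
        have h2 : S *ᵥ (S⁻¹ *ᵥ v.1) = v.1 := by rw [mulVec_mulVec, hinv1, one_mulVec]
        rw [h, mulVec_zero] at h2; exact h2.symm⟩
      left_inv := fun δ => Subtype.ext (by simp [mulVec_mulVec, hinv2, one_mulVec])
      right_inv := fun v => Subtype.ext (by simp [mulVec_mulVec, hinv1, one_mulVec]) }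
  -- pointwise identity
  have point : ∀ δ : Fin n → ℂ,
      (star (S *ᵥ δ) ⬝ᵥ M.mulVec (S *ᵥ δ)).re / (star (S *ᵥ δ) ⬝ᵥ (S *ᵥ δ)).re
        = (star δ ⬝ᵥ P.mulVec (A.mulVec δ)).re / (star δ ⬝ᵥ P.mulVec δ).re := by
    intro δ
    have hstar : star (S *ᵥ δ) = star δ ᵥ* S := by rw [star_mulVec, hSH]
    have hden : star (S *ᵥ δ) ⬝ᵥ (S *ᵥ δ) = star δ ⬝ᵥ P.mulVec δ := by
      rw [hstar, ← dotProduct_mulVec, mulVec_mulVec, hSS]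
    have hSMS : S * M * S = ((1 : ℂ) / 2) • (P * A + Aᴴ * P) := by
      rw [hMdef, Matrix.mul_smul, Matrix.smul_mul]
      congr 1
      calc S * (S⁻¹ * (P * A + Aᴴ * P) * S⁻¹) * S
          = (S * S⁻¹) * (P * A + Aᴴ * P) * (S⁻¹ * S) := by
            simp only [Matrix.mul_assoc]
        _ = P * A + Aᴴ * P := by rw [hinv1, hinv2, Matrix.one_mul, Matrix.mul_one]
    have hnum : star (S *ᵥ δ) ⬝ᵥ M.mulVec (S *ᵥ δ) = star δ ⬝ᵥ ((S * M * S) *ᵥ δ) := by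
      rw [hstar, ← dotProduct_mulVec, mulVec_mulVec, mulVec_mulVec, Matrix.mul_assoc]
    have hconj : star δ ⬝ᵥ ((Aᴴ * P) *ᵥ δ) = star (star δ ⬝ᵥ ((P * A) *ᵥ δ)) := by
      rw [← star_dotProduct_star, star_star, star_mulVec, conjTranspose_mul,
        hP.isHermitian.eq, dotProduct_mulVec]
    have hhalf : ∀ z : ℂ, (((1 : ℂ) / 2) * (z + star z)).re = z.re := by
      intro z
      simp [Complex.star_def, Complex.add_re, Complex.mul_re, Complex.div_re]
      ring
    have hnum2 : (star (S *ᵥ δ) ⬝ᵥ M.mulVec (S *ᵥ δ)).re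
        = (star δ ⬝ᵥ P.mulVec (A.mulVec δ)).re := by
      rw [hnum, hSMS, smul_mulVec, dotProduct_smul, Matrix.add_mulVec, dotProduct_add,
        hconj]
      have hmv : P.mulVec (A.mulVec δ) = (P * A) *ᵥ δ := by rw [mulVec_mulVec]
      rw [hmv, smul_eq_mul]
      exact hhalf _
    rw [hnum2, hden]
  -- assemble
  have key : (⨆ v : {v : Fin n → ℂ // v ≠ 0},
      (star v.1 ⬝ᵥ M.mulVec v.1).re / (star v.1 ⬝ᵥ v.1).re) = ⨆ i, hM.eigenvalues i :=
    rayleigh_sup_eq hn hM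
  refine Eq.trans ?_ key
  rw [← Equiv.iSup_comp (e := e) (g := fun v : {v : Fin n → ℂ // v ≠ 0} =>
      (star v.1 ⬝ᵥ M.mulVec v.1).re / (star v.1 ⬝ᵥ v.1).re)]
  exact iSup_congr fun δ => (point δ.1).symm

/-- the matrix measure of `A` w.r.t. the inner product induced by a Hermitian
positive-definite `P` equals the largest eigenvalue of the Hermitian matrix
`(1/2) P^{-1/2} (P A + Aᴴ P) P^{-1/2}`, where `P^{1/2}` is the Hermitian
positive-semidefinite square root of `P`. -/
theorem matrixMeasure_eq_largest_eigenvalue {n : ℕ} (hn : 0 < n)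
    (P A : Matrix (Fin n) (Fin n) ℂ) (hP : P.PosDef)
    (hM : (((1 : ℂ) / 2) •
        ((hP.posSemidef.sqrt)⁻¹ * (P * A + Aᴴ * P) * (hP.posSemidef.sqrt)⁻¹)).IsHermitian) :
    matrixMeasure P A = ⨆ i, hM.eigenvalues i :=
  matrixMeasure_eq_largest_eigenvalue' hn P A hP hM
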